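/- The kernel of the Laplacian on homogeneous polynomials of degree ν equals the orthogonal complement of the image of multiplication by |x|² (as a map from homogeneous polynomials of degree ν−2 to degree ν), with respect to the Fischer inner product ⟨x^α, x^β⟩ = α! δ_{αβ}. -/

import Mathlib

open MvPolynomial

/-- The Laplacian on polynomials. -/
noncomputable def laplacian {n : ℕ} (P : MvPolynomial (Fin n) ℂ) : MvPolynomial (Fin n) ℂ :=
  ∑ j, pderiv j (pderiv j P)

/-- The Fischer (Bombieri) inner product: ⟨x^α, x^β⟩ = α! δ_{αβ}, extended sesquilinearly. -/
noncomputable def fischer {n : ℕ} (f g : MvPolynomial (Fin n) ℂ) : ℂ :=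
  ∑ α ∈ f.support ∪ g.support,
    (starRingEnd ℂ) (coeff α f) * coeff α g * ∏ j, (Nat.factorial (α j) : ℂ)

lemma coeff_pderiv {n : ℕ} (i : Fin n) (m : Fin n →₀ ℕ) (f : MvPolynomial (Fin n) ℂ) :
    coeff m (pderiv i f) = ((m i : ℂ) + 1) * coeff (m + Finsupp.single i 1) f := by
  induction f using MvPolynomial.induction_on' with
  | monomial s a =>
    rw [pderiv_monomial, coeff_monomial, coeff_monomial]
    by_cases h : s = m + Finsupp.single i 1
    · subst h
      rw [if_pos (add_tsub_cancel_right _ _), if_pos rfl]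
      simp only [Finsupp.add_apply, Finsupp.single_eq_same]
      push_cast; ring
    · rw [if_neg h, mul_zero]
      by_cases h2 : s - Finsupp.single i 1 = m
      · rw [if_pos h2]
        have hsi : s i = 0 := by
          by_contra hsi
          exact h (by rw [← h2, tsub_add_cancel_of_le
            (Finsupp.single_le_iff.mpr (Nat.one_le_iff_ne_zero.mpr hsi))])
        simp [hsi]
      · rw [if_neg h2]
  | add p q hp hq => simp [hp, hq, mul_add]

lemma coeff_pderiv2 {n : ℕ} (j : Fin n) (m : Fin n →₀ ℕ) (P : MvPolynomial (Fin n) ℂ) :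
    coeff m (pderiv j (pderiv j P))
      = ((m j : ℂ) + 1) * ((m j : ℂ) + 2) * coeff (m + Finsupp.single j 2) P := by
  rw [coeff_pderiv, coeff_pderiv]
  have h1 : (m + Finsupp.single j 1 : Fin n →₀ ℕ) j = m j + 1 := by simp
  have h2 : m + Finsupp.single j 1 + Finsupp.single j 1 = m + Finsupp.single j 2 := by
    rw [add_assoc, ← Finsupp.single_add]
  rw [h1, h2]
  push_cast; ring

lemma fischer_eq {n : ℕ} (f g : MvPolynomial (Fin n) ℂ) (s : Finset (Fin n →₀ ℕ))
    (hs : ∀ α, α ∉ s → coeff α f = 0 ∨ coeff α g = 0) :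
    fischer f g = ∑ α ∈ s,
      (starRingEnd ℂ) (coeff α f) * coeff α g * ∏ j, (Nat.factorial (α j) : ℂ) := by
  rw [fischer]
  rw [Finset.sum_subset (Finset.subset_union_right (s₁ := s)
    (s₂ := f.support ∪ g.support))]
  · rw [Finset.sum_subset (Finset.subset_union_left (s₂ := f.support ∪ g.support) (s₁ := s))]
    intro α _ hα
    rcases hs α hα with h | h <;> simp [h]
  · intro α hα hα2
    have : coeff α f = 0 ∨ coeff α g = 0 := by
      by_contra hc
      push_neg at hc
      exact hα2 (Finset.mem_union.mpr (Or.inl (MvPolynomial.mem_support_iff.mpr hc.1)))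
    rcases this with h | h <;> simp [h]

lemma fischer_left {n : ℕ} (f g : MvPolynomial (Fin n) ℂ) :
    fischer f g = ∑ α ∈ f.support,
      (starRingEnd ℂ) (coeff α f) * coeff α g * ∏ j, (Nat.factorial (α j) : ℂ) :=
  fischer_eq f g f.support fun α hα => Or.inl (by simpa using hα)

lemma fischer_right {n : ℕ} (f g : MvPolynomial (Fin n) ℂ) :
    fischer f g = ∑ α ∈ g.support,
      (starRingEnd ℂ) (coeff α f) * coeff α g * ∏ j, (Nat.factorial (α j) : ℂ) :=
  fischer_eq f g g.support fun α hα => Or.inr (by simpa using hα)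

lemma fischer_sum_right {n : ℕ} {ι : Type*} (f : MvPolynomial (Fin n) ℂ) (s : Finset ι)
    (g : ι → MvPolynomial (Fin n) ℂ) :
    fischer f (∑ i ∈ s, g i) = ∑ i ∈ s, fischer f (g i) := by
  simp only [fischer_left, coeff_sum]
  rw [Finset.sum_comm]
  congr 1; ext α
  rw [Finset.mul_sum, Finset.sum_mul]

lemma fischer_sum_left {n : ℕ} {ι : Type*} (g : MvPolynomial (Fin n) ℂ) (s : Finset ι)
    (f : ι → MvPolynomial (Fin n) ℂ) :
    fischer (∑ i ∈ s, f i) g = ∑ i ∈ s, fischer (f i) g := by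
  simp only [fischer_right, coeff_sum, map_sum]
  rw [Finset.sum_comm]
  congr 1; ext α
  rw [Finset.sum_mul, Finset.sum_mul]

/-- key adjoint identity for one variable -/
lemma fischer_Xsq {n : ℕ} (j : Fin n) (P Q : MvPolynomial (Fin n) ℂ) :
    fischer P (X j ^ 2 * Q) = fischer (pderiv j (pderiv j P)) Q := by
  rw [fischer_right (pderiv j (pderiv j P)) Q]
  rw [fischer_eq P (X j ^ 2 * Q)
      (Q.support.map (addLeftEmbedding (Finsupp.single j 2)))
      ?vanish]
  case vanish =>
    intro α hα
    right
    rw [X_pow_eq_monomial, coeff_monomial_mul']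
    split_ifs with h
    · rw [one_mul]
      by_contra hc
      exact hα (Finset.mem_map.mpr ⟨α - Finsupp.single j 2,
        MvPolynomial.mem_support_iff.mpr hc, by
          simp [addLeftEmbedding_apply, add_tsub_cancel_of_le h]⟩)
    · rfl
  rw [Finset.sum_map]
  apply Finset.sum_congr rfl
  intro β hβ
  simp only [addLeftEmbedding_apply]
  rw [X_pow_eq_monomial, coeff_monomial_mul, one_mul, coeff_pderiv2]
  have hadd : β + Finsupp.single j 2 = Finsupp.single j 2 + β := add_comm _ _
  rw [← hadd]
  have hfact : (∏ k, (Nat.factorial (((β + Finsupp.single j 2 : Fin n →₀ ℕ)) k) : ℂ))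
      = ((β j : ℂ) + 1) * ((β j : ℂ) + 2) * ∏ k, (Nat.factorial (β k) : ℂ) := by
    rw [← Finset.mul_prod_erase Finset.univ _ (Finset.mem_univ j),
        ← Finset.mul_prod_erase Finset.univ (fun k => (Nat.factorial (β k) : ℂ))
          (Finset.mem_univ j)]
    have h1 : ∀ k ∈ Finset.univ.erase j,
        (Nat.factorial (((β + Finsupp.single j 2 : Fin n →₀ ℕ)) k) : ℂ) = (Nat.factorial (β k) : ℂ) := by
      intro k hk
      rw [Finsupp.add_apply, Finsupp.single_eq_of_ne' (Finset.ne_of_mem_erase hk).symm, add_zero]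
    rw [Finset.prod_congr rfl h1]
    have h2 : (β + Finsupp.single j 2 : Fin n →₀ ℕ) j = β j + 2 := by simp
    rw [h2]
    have : Nat.factorial (β j + 2) = (β j + 1) * (β j + 2) * Nat.factorial (β j) := by
      rw [Nat.factorial_succ, Nat.factorial_succ]; ring
    rw [this]; push_cast; ring
  rw [hfact, map_mul, map_mul]
  simp only [map_add, map_natCast, map_one, map_ofNat]
  ring
lemma fischer_laplacian {n : ℕ} (P Q : MvPolynomial (Fin n) ℂ) :
    fischer P ((∑ j, X j ^ 2) * Q) = fischer (laplacian P) Q := by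
  rw [Finset.sum_mul, fischer_sum_right, laplacian, fischer_sum_left]
  exact Finset.sum_congr rfl fun j _ => fischer_Xsq j P Q

lemma fischer_self_eq_zero {n : ℕ} {f : MvPolynomial (Fin n) ℂ}
    (h : fischer f f = 0) : f = 0 := by
  have key : fischer f f
      = Complex.ofReal (∑ α ∈ f.support, Complex.normSq (coeff α f) * ∏ j, ((α j).factorial : ℝ)) := by
    rw [fischer_left, Complex.ofReal_sum]
    refine Finset.sum_congr rfl fun α _ => ?_
    rw [mul_comm ((starRingEnd ℂ) (coeff α f)) (coeff α f), Complex.mul_conj]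
    push_cast
    ring
  rw [key, Complex.ofReal_eq_zero] at h
  have hz := (Finset.sum_eq_zero_iff_of_nonneg (fun α _ => mul_nonneg (Complex.normSq_nonneg _) (Finset.prod_nonneg fun j _ => Nat.cast_nonneg _))).mp h
  rw [MvPolynomial.eq_zero_iff]
  intro d
  by_cases hd : d ∈ f.support
  · have h2 := hz d hd
    have hp : (0:ℝ) < ∏ j, ((d j).factorial : ℝ) := by positivity
    rcases mul_eq_zero.mp h2 with h3 | h3
    · exact Complex.normSq_eq_zero.mp h3
    · exact absurd h3 (ne_of_gt hp)
  · exact MvPolynomial.notMem_support_iff.mp hd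

lemma laplacian_isHomogeneous {n ν : ℕ} {P : MvPolynomial (Fin n) ℂ}
    (hP : P.IsHomogeneous ν) : (laplacian P).IsHomogeneous (ν - 2) := by
  intro d hd
  rw [laplacian, coeff_sum] at hd
  obtain ⟨j, -, hj⟩ := Finset.exists_ne_zero_of_sum_ne_zero hd
  rw [coeff_pderiv2] at hj
  have hc : coeff (d + Finsupp.single j 2) P ≠ 0 := fun h0 => hj (by rw [h0, mul_zero])
  have hw := hP hc
  rw [map_add] at hw
  have hsing : (Finsupp.weight (1 : Fin n → ℕ)) (Finsupp.single j 2) = 2 := by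
    simp [Finsupp.weight_apply, Finsupp.sum_single_index]
  rw [hsing] at hw
  omega


/-- On homogeneous polynomials of degree ν, the kernel of the Laplacian is the Fischer-orthogonal
complement of the image of multiplication by |x|² from degree ν − 2. -/
theorem ker_laplacian_eq_orthogonal_range_mul (n ν : ℕ) (hn : 2 ≤ n) :
    {P : MvPolynomial (Fin n) ℂ | P.IsHomogeneous ν ∧ laplacian P = 0}
      = {P : MvPolynomial (Fin n) ℂ | P.IsHomogeneous ν ∧
          ∀ Q : MvPolynomial (Fin n) ℂ, Q.IsHomogeneous (ν - 2) →
            fischer P ((∑ j, X j ^ 2) * Q) = 0} := by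
  ext P
  simp only [Set.mem_setOf_eq]
  constructor
  · rintro ⟨hP, hlap⟩
    refine ⟨hP, fun Q hQ => ?_⟩
    rw [fischer_laplacian, hlap, fischer_left]
    simp
  · rintro ⟨hP, h⟩
    refine ⟨hP, ?_⟩
    have h0 := h (laplacian P) (laplacian_isHomogeneous hP)
    rw [fischer_laplacian] at h0
    exact fischer_self_eq_zero h0
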